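/- Let Φ_{N'}, Φ_M be Choi states of channels with Φ_M entanglement-breaking (separable), and suppose (Φ_{N'} + (d_c−1)Φ_M)/d_c = Φ_{M'} is separable, where d_c ≥ 1 is an integer. Define the map on Choi states Λ(Φ_C) = Tr(φ⁺ Φ_C) Φ_{N'} + Tr((I − φ⁺)Φ_C) Φ_M, where φ⁺ is the maximally entangled state on a d_c-dimensional bipartite system. Then: (i) Λ(Φ_{I_{d_c}}) = Φ_{N'}; (ii) for every separable Choi state Φ_C (with marginal I/d_c), Λ(Φ_C) = qΦ_{M'} + (1−q)Φ_M with q = d_c Tr(φ⁺Φ_C) ∈ [0,1], hence Λ(Φ_C) is separable. -/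

import Mathlib

open scoped Kronecker
open Matrix
open scoped ComplexOrder

/-- The outer product `|ψ⟩⟨ψ|`. -/
noncomputable def outer {A : Type*} (ψ : A → ℂ) : Matrix A A ℂ :=
  Matrix.vecMulVec ψ (star ψ)

/-- Partial trace over the second tensor factor. -/
noncomputable def ptraceB {A B : Type*} [Fintype B] (ρ : Matrix (A × B) (A × B) ℂ) :
    Matrix A A ℂ :=
  Matrix.of fun i j => ∑ k, ρ (i, k) (j, k)

/-- A bipartite matrix is separable if it is a convex combination of pure product states. -/
def SepState {A B : Type*} [Fintype A] [Fintype B]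
    (ρ : Matrix (A × B) (A × B) ℂ) : Prop :=
  ∃ (n : ℕ) (p : Fin n → ℝ) (ψ : Fin n → A → ℂ) (φ : Fin n → B → ℂ),
    (∀ i, 0 ≤ p i) ∧ (∑ i, p i = 1) ∧
    (∀ i, star (ψ i) ⬝ᵥ ψ i = 1) ∧ (∀ i, star (φ i) ⬝ᵥ φ i = 1) ∧
    ρ = ∑ i, (p i : ℂ) • (outer (ψ i) ⊗ₖ outer (φ i))

/-- The maximally entangled state `Φ⁺ = (1/d) ∑_{i,j} |ii⟩⟨jj|`. -/
noncomputable def maxEnt (d : ℕ) : Matrix (Fin d × Fin d) (Fin d × Fin d) ℂ :=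
  Matrix.of fun p q => if p.1 = p.2 ∧ q.1 = q.2 then (d : ℂ)⁻¹ else 0

lemma sum_ite_const {α : Type*} [Fintype α] (p : Prop) [Decidable p] (f : α → ℂ) :
    ∑ x, (if p then f x else 0) = if p then ∑ x, f x else 0 := by
  split <;> simp

lemma trace_maxEnt_mul {d : ℕ} (X : Matrix (Fin d × Fin d) (Fin d × Fin d) ℂ) :
    (maxEnt d * X).trace = (d : ℂ)⁻¹ * ∑ i, ∑ j, X (j, j) (i, i) := by
  simp only [Matrix.trace, Matrix.diag, Matrix.mul_apply, maxEnt, Matrix.of_apply,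
    ite_mul, zero_mul, ite_and]
  rw [Fintype.sum_prod_type]
  simp only [sum_ite_const, Finset.sum_ite_eq, Finset.mem_univ, if_true]
  rw [Finset.mul_sum]
  congr 1; funext i
  rw [Fintype.sum_prod_type]
  simp only [sum_ite_const, Finset.sum_ite_eq, Finset.mem_univ, if_true, Finset.mul_sum]

lemma trace_maxEnt {d : ℕ} : (maxEnt d).trace = if d = 0 then 0 else 1 := by
  simp only [Matrix.trace, Matrix.diag, maxEnt, Matrix.of_apply, and_self]
  rw [Fintype.sum_prod_type]
  simp only [sum_ite_const, Finset.sum_ite_eq, Finset.mem_univ, if_true, and_self]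
  simp only [Finset.sum_const, Finset.card_univ, Fintype.card_fin, nsmul_eq_mul]
  rcases Nat.eq_zero_or_pos d with h | h
  · simp [h]
  · rw [if_neg h.ne', mul_inv_cancel₀]
    exact_mod_cast h.ne'

lemma trace_maxEnt_sq {d : ℕ} (hd : 0 < d) : (maxEnt d * maxEnt d).trace = 1 := by
  rw [trace_maxEnt_mul]
  simp only [maxEnt, Matrix.of_apply, and_self, if_true]
  simp only [Finset.sum_const, Finset.card_univ, Fintype.card_fin, nsmul_eq_mul]
  have hdc : (d : ℂ) ≠ 0 := Nat.cast_ne_zero.mpr hd.ne'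
  field_simp

lemma trace_of_ptraceB {A B : Type*} [Fintype A] [Fintype B]
    (ρ : Matrix (A × B) (A × B) ℂ) : ρ.trace = (ptraceB ρ).trace := by
  simp only [Matrix.trace, Matrix.diag, ptraceB, Matrix.of_apply]
  rw [Fintype.sum_prod_type]

lemma sep_convex {A B : Type*} [Fintype A] [Fintype B]
    {ρ σ : Matrix (A × B) (A × B) ℂ} (hρ : SepState ρ) (hσ : SepState σ)
    {q : ℝ} (h0 : 0 ≤ q) (h1 : q ≤ 1) :
    SepState ((q : ℂ) • ρ + (((1 - q : ℝ)) : ℂ) • σ) := by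
  obtain ⟨n, p, ψ, φ, hp0, hp1, hψ, hφ, hρe⟩ := hρ
  obtain ⟨m, p', ψ', φ', hp0', hp1', hψ', hφ', hσe⟩ := hσ
  refine ⟨n + m, Fin.append (fun i => q * p i) (fun j => (1 - q) * p' j),
    Fin.append ψ ψ', Fin.append φ φ', ?_, ?_, ?_, ?_, ?_⟩
  · intro i
    refine Fin.addCases (fun i => ?_) (fun j => ?_) i
    · rw [Fin.append_left]; exact mul_nonneg h0 (hp0 i)
    · rw [Fin.append_right]; exact mul_nonneg (by linarith) (hp0' j)
  · rw [Fin.sum_univ_add]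
    simp only [Fin.append_left, Fin.append_right, ← Finset.mul_sum, hp1, hp1']
    ring
  · intro i
    refine Fin.addCases (fun i => ?_) (fun j => ?_) i
    · rw [Fin.append_left]; exact hψ i
    · rw [Fin.append_right]; exact hψ' j
  · intro i
    refine Fin.addCases (fun i => ?_) (fun j => ?_) i
    · rw [Fin.append_left]; exact hφ i
    · rw [Fin.append_right]; exact hφ' j
  · rw [Fin.sum_univ_add]
    simp only [Fin.append_left, Fin.append_right]
    rw [hρe, hσe, Finset.smul_sum, Finset.smul_sum]
    congr 1 <;> (refine Finset.sum_congr rfl fun i _ => ?_; push_cast; rw [smul_smul])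

lemma sum_abs_sq_eq_one {n : ℕ} {ψ : Fin n → ℂ} (hψ : star ψ ⬝ᵥ ψ = 1) :
    ∑ j, ‖ψ j‖ ^ 2 = 1 := by
  have h : ((∑ j, ‖ψ j‖ ^ 2 : ℝ) : ℂ) = 1 := by
    rw [← hψ]; push_cast
    refine Finset.sum_congr rfl fun j _ => ?_
    rw [← Complex.ofReal_pow, Complex.sq_norm, Pi.star_apply, RCLike.star_def,
      mul_comm, Complex.mul_conj]
  exact_mod_cast h

lemma normSq_dot_le {n : ℕ} {ψ φ : Fin n → ℂ} (hψ : star ψ ⬝ᵥ ψ = 1)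
    (hφ : star φ ⬝ᵥ φ = 1) : Complex.normSq (ψ ⬝ᵥ φ) ≤ 1 := by
  have h1 : ‖ψ ⬝ᵥ φ‖ ≤ ∑ j, ‖ψ j‖ * ‖φ j‖ := by
    refine le_trans (norm_sum_le _ _) ?_
    exact le_of_eq (Finset.sum_congr rfl fun j _ => norm_mul _ _)
  have h2 : (∑ j, ‖ψ j‖ * ‖φ j‖) ^ 2 ≤
      (∑ j, ‖ψ j‖ ^ 2) * ∑ j, ‖φ j‖ ^ 2 :=
    Finset.sum_mul_sq_le_sq_mul_sq Finset.univ _ _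
  rw [sum_abs_sq_eq_one hψ, sum_abs_sq_eq_one hφ, one_mul] at h2
  have h3 : ‖ψ ⬝ᵥ φ‖ ^ 2 ≤ 1 := by
    calc ‖ψ ⬝ᵥ φ‖ ^ 2 ≤ (∑ j, ‖ψ j‖ * ‖φ j‖) ^ 2 :=
          pow_le_pow_left₀ (norm_nonneg _) h1 2
      _ ≤ 1 := h2
  rwa [Complex.sq_norm] at h3

lemma sum_comm3 {α β γ : Type*} [Fintype α] [Fintype β] [Fintype γ] (f : α → β → γ → ℂ) :
    ∑ i, ∑ j, ∑ t, f i j t = ∑ t, ∑ j, ∑ i, f i j t := by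
  rw [Finset.sum_comm]
  rw [show ∑ j, ∑ i, ∑ t, f i j t = ∑ j, ∑ t, ∑ i, f i j t from
    Finset.sum_congr rfl fun j _ => Finset.sum_comm]
  rw [Finset.sum_comm]

lemma sep_diag_sum {d : ℕ} {ΦC : Matrix (Fin d × Fin d) (Fin d × Fin d) ℂ}
    (h : SepState ΦC) :
    ∃ r : ℝ, 0 ≤ r ∧ r ≤ 1 ∧ (∑ i, ∑ j, ΦC (j, j) (i, i)) = (r : ℂ) := by
  obtain ⟨n, p, ψ, φ, hp0, hp1, hψ, hφ, he⟩ := h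
  refine ⟨∑ t, p t * Complex.normSq (ψ t ⬝ᵥ φ t), ?_, ?_, ?_⟩
  · exact Finset.sum_nonneg fun t _ => mul_nonneg (hp0 t) (Complex.normSq_nonneg _)
  · calc ∑ t, p t * Complex.normSq (ψ t ⬝ᵥ φ t) ≤ ∑ t, p t * 1 :=
          Finset.sum_le_sum fun t _ =>
            mul_le_mul_of_nonneg_left (normSq_dot_le (hψ t) (hφ t)) (hp0 t)
      _ = 1 := by simpa using hp1
  · rw [he]
    simp only [Matrix.sum_apply, Matrix.smul_apply, Matrix.kroneckerMap_apply, outer,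
      Matrix.vecMulVec_apply, Pi.star_apply, RCLike.star_def, smul_eq_mul]
    rw [sum_comm3]
    push_cast
    refine Finset.sum_congr rfl fun t _ => ?_
    rw [← Complex.mul_conj, dotProduct, map_sum, Finset.sum_mul_sum, Finset.mul_sum]
    refine Finset.sum_congr rfl fun j _ => ?_
    rw [Finset.mul_sum]
    refine Finset.sum_congr rfl fun i _ => ?_
    simp only [_root_.map_mul]
    ring

/-- The free superchannel used in one-shot memory synthesis, described on Choi states:
`Λ(Φ_C) = Tr(φ⁺Φ_C) Φ_{N'} + Tr((1-φ⁺)Φ_C) Φ_M` sends the Choi state of the ideal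
`d_c`-dimensional memory to `Φ_{N'}` and maps every separable Choi state to a
separable Choi state, via `Λ(Φ_C) = qΦ_{M'} + (1-q)Φ_M` with `q = d_c Tr(φ⁺Φ_C) ∈ [0,1]`. -/
theorem stmt18 (dc : ℕ) (hdc : 0 < dc)
    {A B : Type*} [Fintype A] [Fintype B] [DecidableEq A] [DecidableEq B]
    (ΦN ΦM ΦM' : Matrix (A × B) (A × B) ℂ)
    (hΦN : ΦN.PosSemidef)
    (hΦNm : ptraceB ΦN = ((Fintype.card A : ℂ))⁻¹ • (1 : Matrix A A ℂ))
    (hΦMsep : SepState ΦM) (hΦMpsd : ΦM.PosSemidef)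
    (hΦMm : ptraceB ΦM = ((Fintype.card A : ℂ))⁻¹ • (1 : Matrix A A ℂ))
    (hM' : ΦM' = (dc : ℂ)⁻¹ • ΦN + (((dc : ℂ) - 1) * (dc : ℂ)⁻¹) • ΦM)
    (hM'sep : SepState ΦM')
    (Λ : Matrix (Fin dc × Fin dc) (Fin dc × Fin dc) ℂ → Matrix (A × B) (A × B) ℂ)
    (hΛ : ∀ X, Λ X = ((maxEnt dc * X).trace) • ΦN
      + (((1 - maxEnt dc) * X).trace) • ΦM) :
    Λ (maxEnt dc) = ΦN ∧
    ∀ ΦC : Matrix (Fin dc × Fin dc) (Fin dc × Fin dc) ℂ,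
      SepState ΦC → ΦC.PosSemidef →
      ptraceB ΦC = (dc : ℂ)⁻¹ • (1 : Matrix (Fin dc) (Fin dc) ℂ) →
      ∀ q : ℝ, q = (dc : ℝ) * ((maxEnt dc * ΦC).trace).re →
        Λ ΦC = ((q : ℝ) : ℂ) • ΦM' + (((1 - q : ℝ) : ℂ)) • ΦM ∧
        0 ≤ q ∧ q ≤ 1 ∧ SepState (Λ ΦC) := by

  have hdc0 : (dc : ℂ) ≠ 0 := Nat.cast_ne_zero.mpr hdc.ne'
  have hdcR : (dc : ℝ) ≠ 0 := Nat.cast_ne_zero.mpr hdc.ne'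
  constructor
  · rw [hΛ, trace_maxEnt_sq hdc, sub_mul, one_mul, Matrix.trace_sub, trace_maxEnt_sq hdc,
      trace_maxEnt, if_neg hdc.ne']
    simp
  · intro ΦC hsep hpsd hmarg q hq
    obtain ⟨r, hr0, hr1, hrsum⟩ := sep_diag_sum hsep
    have htr : (maxEnt dc * ΦC).trace = (((dc : ℝ)⁻¹ * r : ℝ) : ℂ) := by
      rw [trace_maxEnt_mul, hrsum]; push_cast; ring
    have hq' : q = r := by
      rw [hq, htr, Complex.ofReal_re]
      field_simp
    have htrC : ΦC.trace = 1 := by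
      rw [trace_of_ptraceB, hmarg, Matrix.trace_smul, Matrix.trace_one]
      simp only [Fintype.card_fin, smul_eq_mul]
      field_simp
    have hmain : Λ ΦC = ((q : ℝ) : ℂ) • ΦM' + (((1 - q : ℝ)) : ℂ) • ΦM := by
      rw [hΛ, htr, sub_mul, one_mul, Matrix.trace_sub, htrC, htr, hM', hq']
      push_cast
      match_scalars <;> field_simp <;> ring
    refine ⟨hmain, by rw [hq']; exact hr0, by rw [hq']; exact hr1, ?_⟩
    rw [hmain]
    exact sep_convex hM'sep hΦMsep (by rw [hq']; exact hr0) (by rw [hq']; exact hr1)
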